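/- Let P be a set of roots of L such that the sum of two elements of P belongs to P whenever it is a root, and such that no sum of a nonempty finite family of elements of P equals zero. Let h ∈ H and let n ∈ N := Σ_{α∈P} L_α. Then the characteristic polynomial of the endomorphism ad(h + n) of L is equal to the characteristic polynomial of ad h. (This is the Lie-theoretic content of the commutativity of the diagram 𝔟 → 𝔱 → 𝔠 versus 𝔟 ↪ 𝔤 → 𝔠 used in the paper's Lemma on reduction in steps: the image of an element of a Borel subalgebra under the adjoint-invariant quotient map depends only on its Cartan component.) -/

import Mathlib

set_option maxHeartbeats 1000000


open LieModule LieAlgebra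

/-- **The characteristic polynomial of `ad(h + n)` depends only on the Cartan component.**
`K` algebraically closed of characteristic zero, `L` a finite-dimensional Lie algebra over `K`
with nondegenerate Killing form, `H` a Cartan subalgebra.  Let `P` be a set of roots closed
under addition whenever the sum is a root, with no nonempty finite family of elements of `P`
(repetitions allowed) summing to zero.  Then for `h ∈ H` and `n ∈ N := Σ_{α ∈ P} L_α`, the
characteristic polynomial of `ad (h + n)` equals that of `ad h`. -/
theorem charpoly_ad_add_nilRadical_eq
    {K : Type*} [Field K] [IsAlgClosed K] [CharZero K]
    {L : Type*} [LieRing L] [LieAlgebra K L] [Module.Finite K L]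
    [LieAlgebra.IsKilling K L]
    (H : LieSubalgebra K L) [H.IsCartanSubalgebra]
    (P : Set (H → K))
    (hP : ∀ α ∈ P, α ≠ 0 ∧ rootSpace H α ≠ ⊥)
    (hadd : ∀ α ∈ P, ∀ β ∈ P, α + β ≠ 0 → rootSpace H (α + β) ≠ ⊥ → α + β ∈ P)
    (hsum : ∀ (n : ℕ) (c : Fin (n + 1) → (H → K)),
      (∀ i, c i ∈ P) → ∑ i, c i ≠ 0)
    (h : H) (n : L) (hn : n ∈ ⨆ α ∈ P, rootSpace H α) :
    (LieAlgebra.ad K L ((h : L) + n)).charpoly = (LieAlgebra.ad K L (h : L)).charpoly := by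
  classical
  -- `S` is the set of sums of nonempty finite families of elements of `P`.
  set S : Set (H → K) :=
    {x | ∃ (m : ℕ) (c : Fin (m + 1) → (H → K)), (∀ i, c i ∈ P) ∧ x = ∑ i, c i} with hSdef
  have hPS : ∀ α ∈ P, α ∈ S := fun α hα => ⟨0, fun _ => α, fun _ => hα, by simp⟩
  have hSadd : ∀ x ∈ S, ∀ y ∈ S, x + y ∈ S := by
    rintro x ⟨m, c, hc, rfl⟩ y ⟨m', c', hc', rfl⟩
    have hcast : m + m' + 1 + 1 = (m + 1) + (m' + 1) := by omega
    have hall : ∀ j : Fin ((m + 1) + (m' + 1)), Fin.append c c' j ∈ P := fun j =>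
      Fin.addCases (fun i => by simpa using hc i) (fun i => by simpa using hc' i) j
    refine ⟨m + m' + 1, fun i => Fin.append c c' (Fin.cast hcast i), fun i => hall _, ?_⟩
    have heq : ∑ i : Fin (m + m' + 1 + 1), Fin.append c c' (Fin.cast hcast i) =
        ∑ j : Fin ((m + 1) + (m' + 1)), Fin.append c c' j :=
      Fintype.sum_equiv (finCongr hcast) _ _ (fun i => rfl)
    rw [heq]
    conv_rhs => rw [Fin.sum_univ_add]
    have e1 : ∀ i : Fin (m + 1), Fin.append c c' (Fin.castAdd (m' + 1) i) = c i :=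
      fun i => Fin.append_left _ _ _
    have e2 : ∀ i : Fin (m' + 1), Fin.append c c' (Fin.natAdd (m + 1) i) = c' i :=
      fun i => Fin.append_right _ _ _
    simp only [e1, e2]
  have h0S : ∀ x ∈ S, x ≠ 0 := by
    rintro x ⟨m, c, hc, rfl⟩
    exact hsum m c hc
  -- a partial order on weights:  `χ ≤ χ'` iff `χ = χ' + s` for some `s ∈ S` (or `χ = χ'`).
  letI po : PartialOrder (Weight K H L) :=
  { le := fun χ χ' => χ = χ' ∨ ∃ s ∈ S, (χ : H → K) = (χ' : H → K) + s
    le_refl := fun χ => Or.inl rfl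
    le_trans := by
      rintro a b c (rfl | ⟨s, hs, hab⟩) hbc
      · exact hbc
      · rcases hbc with rfl | ⟨t, ht, hbc⟩
        · exact Or.inr ⟨s, hs, hab⟩
        · exact Or.inr ⟨t + s, hSadd _ ht _ hs, by rw [hab, hbc, add_assoc]⟩
    le_antisymm := by
      rintro a b (rfl | ⟨s, hs, hab⟩) hba
      · rfl
      · rcases hba with rfl | ⟨t, ht, hba⟩
        · rfl
        · exfalso
          have h1 : (a : H → K) = (a : H → K) + (t + s) := by
            calc (a : H → K) = (b : H → K) + s := hab
              _ = ((a : H → K) + t) + s := by rw [hba]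
              _ = (a : H → K) + (t + s) := add_assoc _ _ _
          exact h0S (t + s) (hSadd _ ht _ hs) (left_eq_add.mp h1) }
  -- extend it to a linear order
  let w : Weight K H L → LinearExtension (Weight K H L) := toLinearExtension
  have hw_inj : Function.Injective w := fun a b hab => hab
  have hw_mono : ∀ {a b : Weight K H L}, a ≤ b → w a ≤ w b :=
    fun hab => toLinearExtension.monotone' hab
  -- the weight space decomposition of `L`
  have hds : DirectSum.IsInternal
      (fun χ : Weight K H L => (genWeightSpace L (χ : H → K) : Submodule K L)) := by
    apply DirectSum.isInternal_submodule_of_iSupIndep_of_iSup_eq_top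
    · have := iSupIndep_genWeightSpace' K H L
      rwa [← LieSubmodule.iSupIndep_toSubmodule] at this
    · have h2 := iSup_genWeightSpace_eq_top' K H L
      have h3 : ((⨆ χ : Weight K H L, genWeightSpace L (χ : H → K) :
          LieSubmodule K H L) : Submodule K L) = ⊤ := by
        rw [h2]; rfl
      rwa [LieSubmodule.iSup_toSubmodule] at h3
  let v := fun χ : Weight K H L =>
    Module.finBasis K (genWeightSpace L (χ : H → K) : Submodule K L)
  let b := hds.collectedBasis v
  -- repr vanishing for elements of sub-sups of weight spaces
  have key : ∀ (T' : Set (H → K)) (x : L),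
      x ∈ (⨆ χ' : T', (genWeightSpace L (χ' : H → K) : Submodule K L)) →
      ∀ i : (Σ χ : Weight K H L, Fin (Module.finrank K
        (genWeightSpace L (χ : H → K) : Submodule K L))),
      ((i.1 : H → K) ∉ T') → b.repr x i = 0 := by
    intro T' x hx
    refine Submodule.iSup_induction (motive := fun y => ∀ i, ((i.1 : H → K) ∉ T') → b.repr y i = 0)
      _ hx ?_ (by simp) ?_
    · rintro ⟨χ', hχ'⟩ y hy ⟨iw, ik⟩ hiT
      by_cases hbot : genWeightSpace L χ' = ⊥
      · have hy0 : y = 0 := by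
          have hb2 : (genWeightSpace L χ' : Submodule K L) = ⊥ := by rw [hbot]; rfl
          rw [hb2] at hy
          simpa using hy
        simp [hy0]
      · have hne : (⟨χ', hbot⟩ : Weight K H L) ≠ iw := by
          intro e
          have hcoe : (iw : H → K) = χ' :=
            congrArg (fun t : Weight K H L => (t : H → K)) e.symm
          exact hiT (by rw [hcoe]; exact hχ')
        exact hds.collectedBasis_repr_of_mem_ne v hne hy
    · intro y z hy hz i hi
      rw [map_add, Finsupp.add_apply, hy i hi, hz i hi, add_zero]
  -- `n` as an element of the submodule-level sup
  have hn' : n ∈ (⨆ α : P, (rootSpace H (α : H → K) : Submodule K L)) := by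
    have h4 : ((⨆ α ∈ P, rootSpace H α : LieSubmodule K H L) : Submodule K L) =
        ⨆ α : P, (rootSpace H (α : H → K) : Submodule K L) := by
      rw [iSup_subtype']
      simp only [LieSubmodule.iSup_toSubmodule]
    rw [← h4]
    exact hn
  -- `ad n` raises weights by elements of `S`
  have raise : ∀ (χ : H → K) (y : L), y ∈ (genWeightSpace L χ : Submodule K L) →
      ⁅n, y⁆ ∈ (⨆ χ' : {χ'' | ∃ s ∈ S, χ'' = χ + s},
        (genWeightSpace L (χ' : H → K) : Submodule K L)) := by
    intro χ y hy
    refine Submodule.iSup_induction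
      (motive := fun x => ⁅x, y⁆ ∈ (⨆ χ' : {χ'' | ∃ s ∈ S, χ'' = χ + s},
        (genWeightSpace L (χ' : H → K) : Submodule K L))) _ hn' ?_ (by simp) ?_
    · rintro ⟨α, hα⟩ x hx
      have hlie : ⁅x, y⁆ ∈ genWeightSpace L ((α : H → K) + χ) :=
        lie_mem_genWeightSpace_of_mem_genWeightSpace hx hy
      have hT : ((α : H → K) + χ) ∈ {χ'' | ∃ s ∈ S, χ'' = χ + s} :=
        ⟨α, hPS α hα, by rw [add_comm]⟩
      exact le_iSup (fun χ' : {χ'' | ∃ s ∈ S, χ'' = χ + s} =>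
        (genWeightSpace L (χ' : H → K) : Submodule K L)) ⟨_, hT⟩ hlie
    · intro x z hx hz
      rw [add_lie]
      exact add_mem hx hz
  -- the three matrices
  let A := LinearMap.toMatrix b b (ad K L ((h : L) + n))
  let B := LinearMap.toMatrix b b (ad K L (h : L))
  let C := LinearMap.toMatrix b b (ad K L n)
  have hadc : ad K L ((h : L) + n) = ad K L (h : L) + ad K L n := by
    ext y; simp [add_lie]
  have hABC' : A = B + C := by
    show LinearMap.toMatrix b b _ = _
    rw [hadc, map_add]
  have hABC : ∀ i j, A i j = B i j + C i j := by
    intro i j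
    rw [hABC', Matrix.add_apply]
  have hBapp : ∀ i j, B i j = b.repr (ad K L (h : L) (b j)) i :=
    fun i j => LinearMap.toMatrix_apply b b _ i j
  have hCapp : ∀ i j, C i j = b.repr (ad K L n (b j)) i :=
    fun i j => LinearMap.toMatrix_apply b b _ i j
  -- `B` is block diagonal
  have hB0 : ∀ i j, i.1 ≠ j.1 → B i j = 0 := by
    rintro ⟨iw, ik⟩ ⟨jw, jk⟩ hij
    have hbj := hds.collectedBasis_mem v ⟨jw, jk⟩
    have hmem : ad K L (h : L) (b ⟨jw, jk⟩) ∈ (genWeightSpace L (jw : H → K) : Submodule K L) := by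
      have h5 := (genWeightSpace L (jw : H → K)).lie_mem (x := h) (m := b ⟨jw, jk⟩) hbj
      simpa [LieSubalgebra.coe_bracket_of_module] using h5
    rw [hBapp]
    exact hds.collectedBasis_repr_of_mem_ne v (Ne.symm hij) hmem
  -- `C` strictly raises
  have hC0 : ∀ i j, ¬ (∃ s ∈ S, (i.1 : H → K) = (j.1 : H → K) + s) → C i j = 0 := by
    rintro ⟨iw, ik⟩ ⟨jw, jk⟩ hns
    have hbj := hds.collectedBasis_mem v ⟨jw, jk⟩
    have h6 := raise (jw : H → K) _ hbj
    rw [hCapp]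
    exact key _ _ h6 ⟨iw, ik⟩ hns
  let wf : (Σ χ : Weight K H L, Fin (Module.finrank K
      (genWeightSpace L (χ : H → K) : Submodule K L))) → LinearExtension (Weight K H L) :=
    fun i => w i.1
  have hBT_B : B.BlockTriangular wf := fun i j hlt =>
    hB0 i j (fun e => hlt.ne' (congrArg w e))
  have hBT_A : A.BlockTriangular wf := by
    intro i j hlt
    have hC : C i j = 0 := by
      refine hC0 i j ?_
      rintro ⟨s, hs, heq⟩
      exact absurd (hw_mono (Or.inr ⟨s, hs, heq⟩)) (not_le_of_gt hlt)
    have hB : B i j = 0 := hB0 i j (fun e => hlt.ne' (congrArg w e))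
    rw [hABC, hB, hC, add_zero]
  have hblock : ∀ a, A.toSquareBlock wf a = B.toSquareBlock wf a := by
    intro a
    ext ⟨i, hi⟩ ⟨j, hj⟩
    have he : i.1 = j.1 := hw_inj (hi.trans hj.symm)
    have hC : C i j = 0 := by
      refine hC0 i j ?_
      rintro ⟨s, hs, heq⟩
      rw [he] at heq
      exact h0S s hs (left_eq_add.mp heq)
    have h7 := hABC i j
    rw [hC, add_zero] at h7
    exact h7
  calc (ad K L ((h : L) + n)).charpoly
      = A.charpoly := (LinearMap.charpoly_toMatrix _ b).symm
    _ = ∏ a ∈ Finset.univ.image wf, (A.toSquareBlock wf a).charpoly := Matrix.BlockTriangular.charpoly A hBT_A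
    _ = ∏ a ∈ Finset.univ.image wf, (B.toSquareBlock wf a).charpoly := by
        exact Finset.prod_congr rfl (fun a _ => by rw [hblock a])
    _ = B.charpoly := (Matrix.BlockTriangular.charpoly B hBT_B).symm
    _ = (ad K L (h : L)).charpoly := LinearMap.charpoly_toMatrix _ b
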